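/- Let d ≥ 3 be a natural number, let x* be the unique solution of 1 − (1 − x/2)^d = x in the interval (0, 1], and set c = 1 − x*/2. Then c^{d−1} < 2/d. -/

import Mathlib

lemma nat_bound : ∀ d : ℕ, 4 ≤ d → 4 * (d - 1) < 2 ^ d := by
  intro d hd
  induction d with
  | zero => omega
  | succ n ih =>
    rcases Nat.lt_or_ge n 4 with h | h
    · have hn : n = 3 := by omega
      subst hn; norm_num
    · have h1 := ih (by omega)
      have h2 : (4:ℕ) ≤ 2 ^ n := by
        calc (4:ℕ) = 2 ^ 2 := rfl
        _ ≤ 2 ^ n := Nat.pow_le_pow_right (by norm_num) (by omega)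
      have e : 2 ^ (n+1) = 2 ^ n + 2 ^ n := by ring
      omega

lemma exp_43 : Real.exp (4/3) < 4 := by
  have h1 : Real.exp (4/3) ^ 3 = Real.exp 4 := by
    rw [← Real.exp_nat_mul]; norm_num
  have h2 : Real.exp 4 < 64 := by
    have e4 : Real.exp 4 = Real.exp 1 ^ 4 := by
      rw [← Real.exp_nat_mul]; norm_num
    have : Real.exp 1 ^ 4 < 2.7182818286 ^ 4 :=
      pow_lt_pow_left₀ Real.exp_one_lt_d9 (Real.exp_pos 1).le (by norm_num)
    rw [e4]
    calc Real.exp 1 ^ 4 < 2.7182818286 ^ 4 := this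
    _ < 64 := by norm_num
  have h3 : Real.exp (4/3) ^ 3 < 4 ^ 3 := by rw [h1]; norm_num; linarith
  exact lt_of_pow_lt_pow_left₀ 3 (by norm_num) h3

lemma key_bound (d : ℕ) (hd : 3 ≤ d) :
    ((d:ℝ)/(2*((d:ℝ)-1)))^d < 1/((d:ℝ)-1) := by
  rcases eq_or_lt_of_le hd with h3 | h4
  · have : d = 3 := h3.symm
    subst this
    norm_num
  · -- d ≥ 4
    have hd4 : (4:ℝ) ≤ (d:ℝ) := by exact_mod_cast h4
    set D : ℝ := (d:ℝ) with hD
    have hD1 : (0:ℝ) < D - 1 := by linarith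
    have h1 : D/(2*(D-1)) = (1/2)*(1 + 1/(D-1)) := by field_simp; ring
    have hbase : (0:ℝ) ≤ 1 + 1/(D-1) := by positivity
    have he : 1 + 1/(D-1) ≤ Real.exp (1/(D-1)) := by
      have := Real.add_one_le_exp (1/(D-1)); linarith
    have hpow : (1 + 1/(D-1))^d ≤ Real.exp (1/(D-1))^d :=
      pow_le_pow_left₀ hbase he d
    have hexp : Real.exp (1/(D-1))^d = Real.exp (D/(D-1)) := by
      rw [← Real.exp_nat_mul]
      congr 1
      rw [mul_one_div]
    have h43 : D/(D-1) ≤ 4/3 := by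
      rw [div_le_div_iff₀ hD1 (by norm_num : (0:ℝ) < 3)]
      linarith
    have hexp2 : Real.exp (D/(D-1)) ≤ Real.exp (4/3) := Real.exp_le_exp.2 h43
    have h4lt : (1 + 1/(D-1))^d < 4 := by
      calc (1 + 1/(D-1))^d ≤ Real.exp (1/(D-1))^d := hpow
      _ = Real.exp (D/(D-1)) := hexp
      _ ≤ Real.exp (4/3) := hexp2
      _ < 4 := exp_43
    have hnat : (4:ℝ) * (D - 1) < 2 ^ d := by
      have := nat_bound d (by omega)
      have hcast : ((4 * (d - 1) : ℕ) : ℝ) < ((2 ^ d : ℕ) : ℝ) := by exact_mod_cast this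
      have h1d : (1:ℕ) ≤ d := by omega
      push_cast [Nat.cast_sub h1d] at hcast
      convert hcast using 2 <;> norm_num
    have h2pos : (0:ℝ) < 2 ^ d := by positivity
    calc (D/(2*(D-1)))^d = ((1/2)*(1 + 1/(D-1)))^d := by rw [h1]
    _ = (1/2)^d * (1 + 1/(D-1))^d := by rw [mul_pow]
    _ < (1/2)^d * 4 := by
        apply mul_lt_mul_of_pos_left h4lt (by positivity)
    _ = 4 / 2^d := by rw [one_div, inv_pow]; ring
    _ < 1/(D-1) := by
        rw [div_lt_div_iff₀ h2pos hD1]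
        linarith

/-- **Lemma 2.2.** With `x*` the unique solution of `1-(1-x/2)^d = x` in `(0,1]`
and `c = 1 - x*/2`, one has `c^{d-1} < 2/d` for `d ≥ 3`. -/
theorem c_pow_lt (d : ℕ) (hd : 3 ≤ d) (xstar c : ℝ)
    (hx0 : 0 < xstar) (hx1 : xstar ≤ 1)
    (hxeq : 1 - (1 - xstar / 2) ^ d = xstar)
    (hc : c = 1 - xstar / 2) :
    c ^ (d - 1) < 2 / d := by
  have hd3 : (3:ℝ) ≤ (d:ℝ) := by exact_mod_cast hd
  have hdpos : (0:ℝ) < (d:ℝ) := by linarith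
  have hc1 : c < 1 := by rw [hc]; linarith
  have hc2 : 1/2 ≤ c := by rw [hc]; linarith
  have hcpos : (0:ℝ) < c := by linarith
  have hcd : c ^ d = 2*c - 1 := by
    rw [hc]; linarith [hxeq]
  set c0 : ℝ := (d:ℝ)/(2*((d:ℝ)-1)) with hc0
  have hD1 : (0:ℝ) < (d:ℝ) - 1 := by linarith
  have hkey := key_bound d hd
  have hc0eq : 2*c0 - 1 = 1/((d:ℝ)-1) := by
    rw [hc0]; field_simp
    ring
  have hkey' : c0 ^ d < 2*c0 - 1 := by rw [hc0eq]; exact hkey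
  have hc0nonneg : (0:ℝ) ≤ c0 := by
    rw [hc0]; positivity
  have hc01 : c0 < 1 := by
    rw [hc0, div_lt_one (by linarith)]; linarith
  have hmul0 : c0 * (2*((d:ℝ)-1)) = (d:ℝ) := by
    rw [hc0, div_mul_cancel₀]; positivity
  clear_value c0
  have hcc0 : c < c0 := by
    by_contra hcon
    push_neg at hcon
    set a : ℝ := (1-c)/(1-c0) with ha_def
    set b : ℝ := (c-c0)/(1-c0) with hb_def
    have ha : 0 < a := div_pos (by linarith) (by linarith)
    have hb : 0 ≤ b := div_nonneg (by linarith) (by linarith)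
    have hab : a + b = 1 := by
      rw [ha_def, hb_def, ← add_div, div_eq_one_iff_eq (by linarith)]
      ring
    have hx : a * c0 + b * 1 = c := by
      rw [ha_def, hb_def, mul_one, div_mul_eq_mul_div, ← add_div,
        div_eq_iff (by linarith : (1:ℝ)-c0 ≠ 0)]
      ring
    have h := (convexOn_pow d).2 (Set.mem_Ici.2 hc0nonneg)
      (Set.mem_Ici.2 (zero_le_one)) ha.le hb hab
    simp only [smul_eq_mul, one_pow] at h
    rw [hx] at h
    -- h : c ^ d ≤ a * c0 ^ d + b * 1
    rw [hcd] at h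
    have hint : 0 < a * (2*c0 - 1 - c0^d) := mul_pos ha (by linarith)
    nlinarith [h, hint, hx, hab]
  -- finish: c^(d-1) = (2c-1)/c < 2/d
  have hdm : d - 1 + 1 = d := by omega
  have hcpow : c ^ (d-1) * c = c ^ d := by rw [← pow_succ, hdm]
  have heq : c ^ (d-1) = (2*c-1)/c := by
    rw [eq_div_iff hcpos.ne']
    rw [hcpow, hcd]
  rw [heq, div_lt_div_iff₀ hcpos hdpos]
  have hmul : c * (2*((d:ℝ)-1)) < (d:ℝ) := by
    calc c * (2*((d:ℝ)-1)) < c0 * (2*((d:ℝ)-1)) := by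
          apply mul_lt_mul_of_pos_right hcc0 (by linarith)
    _ = (d:ℝ) := hmul0
  nlinarith [hmul]
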